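/- Let p be a prime and let A be an N×N matrix over the finite field F_p = ZMod p. Let C_A = {v ∈ F_p^N : A^k v = v for some k ≥ 1} be the set of periodic points of A (a linear subspace of F_p^N). Write the characteristic polynomial of A as P_A(λ) = λ^k · f_A(λ) with f_A(0) ≠ 0. Then the dimension of C_A equals the degree of f_A; equivalently, dim C_A = N − (the multiplicity of 0 as a root of the characteristic polynomial of A). -/

import Mathlib

open Matrix Polynomial

/-- For an N×N matrix `A` over `F_p`, the set of periodic points
`C_A = {v | A^k v = v for some k ≥ 1}` is a linear subspace whose dimension equals
`N - (multiplicity of 0 as a root of the characteristic polynomial)`; equivalently, whenever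
`P_A(λ) = λ^k f(λ)` with `f(0) ≠ 0`, the dimension equals `deg f`. -/
theorem periodic_points_dim (p : ℕ) [Fact p.Prime] (N : ℕ) (hN : 0 < N)
    (A : Matrix (Fin N) (Fin N) (ZMod p)) :
    ∃ W : Submodule (ZMod p) (Fin N → ZMod p),
      (W : Set (Fin N → ZMod p)) = {v | ∃ k ≥ 1, (A ^ k) *ᵥ v = v} ∧
      Module.finrank (ZMod p) W = N - Polynomial.rootMultiplicity 0 A.charpoly ∧
      ∀ (k : ℕ) (f : Polynomial (ZMod p)), A.charpoly = X ^ k * f → f.eval 0 ≠ 0 →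
        Module.finrank (ZMod p) W = f.natDegree := by
  classical
  set φ : Module.End (ZMod p) (Fin N → ZMod p) := Matrix.mulVecLin A with hφ
  have hpow : ∀ k : ℕ, Matrix.mulVecLin (A ^ k) = φ ^ k := by
    intro k
    induction k with
    | zero => simp [Matrix.mulVecLin_one]; rfl
    | succ n ih =>
        rw [pow_succ, pow_succ, Matrix.mulVecLin_mul, ih]
        rfl
  -- find i < j with A^i = A^j
  obtain ⟨a, b, hab, hABeq⟩ :=
    Finite.exists_ne_map_eq_of_infinite (fun n : ℕ => A ^ n)
  -- wlog i < j
  obtain ⟨i, j, hij, hAij⟩ : ∃ i j : ℕ, i < j ∧ A ^ i = A ^ j := by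
    rcases lt_or_gt_of_ne hab with h | h
    · exact ⟨a, b, h, hABeq⟩
    · exact ⟨b, a, h, hABeq.symm⟩
  set d := j - i with hd
  have hd1 : 1 ≤ d := by omega
  have hstep : ∀ m : ℕ, A ^ (i + m) = A ^ (i + d + m) := by
    intro m
    have : i + d = j := by omega
    rw [this, pow_add, pow_add, hAij]
  have hiter : ∀ t m : ℕ, A ^ (i + m) = A ^ (i + t * d + m) := by
    intro t
    induction t with
    | zero => simp
    | succ n ih =>
        intro m
        have h1 : A ^ (i + m) = A ^ (i + (d + m)) := by
          simpa [add_assoc] using hstep m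
        have h2 := ih (d + m)
        rw [h1, h2]
        congr 1
        ring
  set P := (i + N + 1) * d with hP
  have hPge : i + N + 1 ≤ P := Nat.le_mul_of_pos_right _ (by omega)
  set m₀ := P with hm0
  have hm0i : i ≤ m₀ := by omega
  have hm0N : N ≤ m₀ := by omega
  have hm01 : 1 ≤ m₀ := by omega
  have hidem : A ^ (m₀ + m₀) = A ^ m₀ := by
    have htt := hiter (i + N + 1) (m₀ - i)
    rw [← hP] at htt
    have h1 : i + (m₀ - i) = m₀ := by omega
    have h2 : i + m₀ + (m₀ - i) = m₀ + m₀ := by omega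
    rw [h1, h2] at htt
    exact htt.symm
  have hidemφ : φ ^ (m₀ + m₀) = φ ^ m₀ := by
    rw [← hpow, ← hpow, hidem]
  refine ⟨LinearMap.range (φ ^ m₀), ?_, ?_⟩
  · -- set equality
    ext v
    simp only [SetLike.mem_coe, LinearMap.mem_range, Set.mem_setOf_eq]
    constructor
    · rintro ⟨w, rfl⟩
      refine ⟨m₀, hm01, ?_⟩
      have : (A ^ m₀) *ᵥ ((φ ^ m₀) w) = (φ ^ m₀) ((φ ^ m₀) w) := by
        rw [← hpow]; rfl
      rw [this, ← Module.End.mul_apply, ← pow_add, hidemφ]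
    · rintro ⟨k, hk1, hk⟩
      have hkφ : (φ ^ k) v = v := by rw [← hpow]; exact hk
      have hiterv : ∀ t : ℕ, (φ ^ (k * t)) v = v := by
        intro t
        induction t with
        | zero => simp
        | succ n ih =>
            have : k * (n + 1) = k * n + k := by ring
            rw [this, pow_add, Module.End.mul_apply, hkφ, ih]
      refine ⟨(φ ^ (k * m₀ - m₀)) v, ?_⟩
      rw [← Module.End.mul_apply, ← pow_add]
      have : m₀ + (k * m₀ - m₀) = k * m₀ := by
        have : m₀ ≤ k * m₀ := Nat.le_mul_of_pos_left _ (by omega)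
        omega
      rw [this, hiterv m₀]
  · -- dimension computations
    have hcharφ : φ.charpoly = A.charpoly := by
      rw [← LinearMap.charpoly_toMatrix φ (Pi.basisFun (ZMod p) (Fin N)),
        LinearMap.toMatrix_eq_toMatrix', hφ, ← Matrix.toLin'_apply', LinearMap.toMatrix'_toLin']
    have hfinrank : Module.finrank (ZMod p) (Fin N → ZMod p) = N := by
      simp
    -- kernel of φ^m₀ is the maximal generalized eigenspace at 0
    have hker : LinearMap.ker (φ ^ m₀) = φ.maxGenEigenspace 0 := by
      apply le_antisymm
      · intro x hx
        rw [Module.End.mem_maxGenEigenspace]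
        refine ⟨m₀, ?_⟩
        simpa using hx
      · intro x hx
        rw [Module.End.maxGenEigenspace_eq_genEigenspace_finrank,
          Module.End.mem_genEigenspace] at hx
        obtain ⟨l, hl, hx⟩ := hx
        simp only [zero_smul, sub_zero, LinearMap.mem_ker] at hx ⊢
        have hl' : l ≤ m₀ := by
          have : (l : ℕ∞) ≤ (Module.finrank (ZMod p) (Fin N → ZMod p) : ℕ∞) := hl
          have := Nat.cast_le.mp this
          omega
        have : m₀ = (m₀ - l) + l := by omega
        rw [this, pow_add, Module.End.mul_apply, hx, map_zero]
    have hrank : Module.finrank (ZMod p) (LinearMap.range (φ ^ m₀)) =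
        N - Polynomial.rootMultiplicity 0 A.charpoly := by
      have hrn := LinearMap.finrank_range_add_finrank_ker (φ ^ m₀)
      rw [hfinrank, hker, LinearMap.finrank_maxGenEigenspace_zero_eq, hcharφ,
        ← Polynomial.rootMultiplicity_eq_natTrailingDegree'] at hrn
      have hle : Polynomial.rootMultiplicity 0 A.charpoly ≤ N := by omega
      omega
    refine ⟨hrank, ?_⟩
    intro k f hcp hf0
    have hfne : f ≠ 0 := fun h => hf0 (by simp [h])
    have hcpne : A.charpoly ≠ 0 := A.charpoly_monic.ne_zero
    have hXk : (X : Polynomial (ZMod p)) ^ k ≠ 0 := pow_ne_zero _ X_ne_zero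
    have hdegcp : A.charpoly.natDegree = N := by
      rw [Matrix.charpoly_natDegree_eq_dim, Fintype.card_fin]
    have hdeg : N = k + f.natDegree := by
      rw [← hdegcp, hcp, Polynomial.natDegree_mul hXk hfne, Polynomial.natDegree_X_pow]
    have hmult : Polynomial.rootMultiplicity 0 A.charpoly = k := by
      rw [Polynomial.rootMultiplicity_eq_natTrailingDegree', hcp,
        Polynomial.natTrailingDegree_mul hXk hfne, Polynomial.natTrailingDegree_X_pow,
        Polynomial.natTrailingDegree_eq_zero_of_constantCoeff_ne_zero]
      · omega
      · simpa [Polynomial.constantCoeff_apply, Polynomial.coeff_zero_eq_eval_zero] using hf0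
    rw [hrank, hmult]
    omega
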